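/- arXiv:2302.04590 — 4 statements merged into one kernel-verified Lean document; each statement's English description precedes it below -/
import Mathlib

section
/- Let e1, e2, e3, e4 be the standard basis of (ZMod 2)^4, and let v4 = a·e1 + b·e2 + c·e3 + d·e4 and v5 = p·e1 + q·e2 + r·e3 + s·e4 with coefficients in ZMod 2, where (c, d) ≠ (0, 0) and (r, s) ≠ (0, 0). Then there exists w ∈ {e3, e4, e3 + e4} with w ≠ c·e3 + d·e4 and w ≠ r·e3 + s·e4, and for any such w each of the six families {e1, e2, v4, w}, {e1, e1+e2, v4, w}, {e2, e1+e2, v4, w}, {e1, e2, v5, w}, {e1, e1+e2, v5, w}, {e2, e1+e2, v5, w} is linearly independent over ZMod 2 (hence a basis of (ZMod 2)^4). -/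
/-- The standard basis vectors of `(ZMod 2)⁴`. -/
def e1 : Fin 4 → ZMod 2 := ![1, 0, 0, 0]
def e2 : Fin 4 → ZMod 2 := ![0, 1, 0, 0]
def e3 : Fin 4 → ZMod 2 := ![0, 0, 1, 0]
def e4 : Fin 4 → ZMod 2 := ![0, 0, 0, 1]

lemma li_of_det (A : Fin 4 → Fin 4 → ZMod 2) (h : (Matrix.of A).det ≠ 0) :
    LinearIndependent (ZMod 2) A :=
  Matrix.linearIndependent_rows_iff_isUnit.2
    ((Matrix.isUnit_iff_isUnit_det _).2 (isUnit_iff_ne_zero.2 h))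

lemma key (a b c d : ZMod 2) (hcd : ¬(c = 0 ∧ d = 0)) (w : Fin 4 → ZMod 2)
    (hw : w = e3 ∨ w = e4 ∨ w = e3 + e4) (hne : w ≠ c • e3 + d • e4) :
    LinearIndependent (ZMod 2) ![e1, e2, a • e1 + b • e2 + c • e3 + d • e4, w] ∧
    LinearIndependent (ZMod 2) ![e1, e1 + e2, a • e1 + b • e2 + c • e3 + d • e4, w] ∧
    LinearIndependent (ZMod 2) ![e2, e1 + e2, a • e1 + b • e2 + c • e3 + d • e4, w] := by
  refine ⟨li_of_det _ ?_, li_of_det _ ?_, li_of_det _ ?_⟩ <;>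
  · rcases hw with rfl | rfl | rfl <;>
    · revert hne hcd; revert a b c d; decide

lemma key_ex' (c d r s : ZMod 2) (hcd : ¬(c = 0 ∧ d = 0)) (hrs : ¬(r = 0 ∧ s = 0)) :
    (e3 ≠ c • e3 + d • e4 ∧ e3 ≠ r • e3 + s • e4) ∨
    (e4 ≠ c • e3 + d • e4 ∧ e4 ≠ r • e3 + s • e4) ∨
    (e3 + e4 ≠ c • e3 + d • e4 ∧ e3 + e4 ≠ r • e3 + s • e4) := by
  revert hcd hrs; revert c d r s; decide

lemma key_ex (c d r s : ZMod 2) (hcd : ¬(c = 0 ∧ d = 0)) (hrs : ¬(r = 0 ∧ s = 0)) :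
    ∃ w, (w = e3 ∨ w = e4 ∨ w = e3 + e4) ∧
      w ≠ c • e3 + d • e4 ∧ w ≠ r • e3 + s • e4 := by
  rcases key_ex' c d r s hcd hrs with h | h | h
  · exact ⟨e3, Or.inl rfl, h⟩
  · exact ⟨e4, Or.inr (Or.inl rfl), h⟩
  · exact ⟨e3 + e4, Or.inr (Or.inr rfl), h⟩

/-- Resolution of a bad edge with facet vectors `e1, e2, e1+e2`: for facet vectors
`v4 = a•e1 + b•e2 + c•e3 + d•e4` and `v5 = p•e1 + q•e2 + r•e3 + s•e4` at its two
endpoints with `(c,d) ≠ (0,0)` and `(r,s) ≠ (0,0)`, there is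
`w ∈ {e3, e4, e3+e4}` with `w ≠ c•e3 + d•e4` and `w ≠ r•e3 + s•e4`, and for any
such `w` all six families corresponding to the six new vertices of the truncation
are linearly independent. -/
theorem bad_edge_resolution (a b c d p q r s : ZMod 2)
    (hcd : ¬(c = 0 ∧ d = 0)) (hrs : ¬(r = 0 ∧ s = 0))
    (v4 v5 : Fin 4 → ZMod 2)
    (hv4 : v4 = a • e1 + b • e2 + c • e3 + d • e4)
    (hv5 : v5 = p • e1 + q • e2 + r • e3 + s • e4) :
    (∃ w ∈ ({e3, e4, e3 + e4} : Set (Fin 4 → ZMod 2)),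
        w ≠ c • e3 + d • e4 ∧ w ≠ r • e3 + s • e4) ∧
    ∀ w ∈ ({e3, e4, e3 + e4} : Set (Fin 4 → ZMod 2)),
      w ≠ c • e3 + d • e4 → w ≠ r • e3 + s • e4 →
        (LinearIndependent (ZMod 2) ![e1, e2, v4, w] ∧
         LinearIndependent (ZMod 2) ![e1, e1 + e2, v4, w] ∧
         LinearIndependent (ZMod 2) ![e2, e1 + e2, v4, w] ∧
         LinearIndependent (ZMod 2) ![e1, e2, v5, w] ∧
         LinearIndependent (ZMod 2) ![e1, e1 + e2, v5, w] ∧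
         LinearIndependent (ZMod 2) ![e2, e1 + e2, v5, w]) := by
  subst hv4 hv5
  simp only [Set.mem_insert_iff, Set.mem_singleton_iff]
  constructor
  · obtain ⟨w, hw, h1, h2⟩ := key_ex c d r s hcd hrs
    exact ⟨w, hw, h1, h2⟩
  · intro w hw hne1 hne2
    obtain ⟨A1, A2, A3⟩ := key a b c d hcd w hw hne1
    obtain ⟨B1, B2, B3⟩ := key p q r s hrs w hw hne2
    exact ⟨A1, A2, A3, B1, B2, B3⟩
end

section
/- Let W be a 2-dimensional subspace of (ZMod 2)^4, let u1, u2, u3 be its three nonzero elements, and let v, v' ∈ (ZMod 2)^4 with v ∉ W and v' ∉ W. Then there exists w ∈ (ZMod 2)^4 such that for all 1 ≤ i < j ≤ 3 and for each u ∈ {v, v'}, the family {u_i, u_j, u, w} is linearly independent over ZMod 2 (hence a basis of (ZMod 2)^4). -/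
open Submodule

lemma li_aux (W : Submodule (ZMod 2) (Fin 4 → ZMod 2))
    (a b u w : Fin 4 → ZMod 2) (ha : a ∈ W) (hb : b ∈ W)
    (ha0 : a ≠ 0) (hb0 : b ≠ 0) (hab : a ≠ b)
    (hu : u ∉ W) (hw : w ∉ W ⊔ Submodule.span (ZMod 2) {u}) :
    LinearIndependent (ZMod 2) ![a, b, u, w] := by
  have two : ∀ c : ZMod 2, c = 0 ∨ c = 1 := by decide
  have hneg : ∀ x : Fin 4 → ZMod 2, -x = x := by
    intro x; funext i; exact CharTwo.neg_eq _
  rw [Fintype.linearIndependent_iff]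
  intro g hg
  have hsum : g 0 • a + g 1 • b + g 2 • u + g 3 • w = 0 := by
    simpa [Fin.sum_univ_four] using hg
  have hWmem : ∀ c d : ZMod 2, c • a + d • b ∈ W := fun c d =>
    W.add_mem (W.smul_mem _ ha) (W.smul_mem _ hb)
  have hg3 : g 3 = 0 := by
    rcases two (g 3) with h | h
    · exact h
    · exfalso
      apply hw
      have : w = g 0 • a + g 1 • b + g 2 • u := by
        rw [h, one_smul] at hsum
        rw [eq_neg_of_add_eq_zero_right hsum, hneg]
      rw [this]
      exact add_mem (Submodule.mem_sup_left (hWmem _ _))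
        (Submodule.mem_sup_right (Submodule.smul_mem _ _ (Submodule.mem_span_singleton_self u)))
  rw [hg3, zero_smul, add_zero] at hsum
  have hg2 : g 2 = 0 := by
    rcases two (g 2) with h | h
    · exact h
    · exfalso
      apply hu
      have : u = g 0 • a + g 1 • b := by
        rw [h, one_smul] at hsum
        rw [eq_neg_of_add_eq_zero_right hsum, hneg]
      rw [this]; exact hWmem _ _
  rw [hg2, zero_smul, add_zero] at hsum
  have hg0 : g 0 = 0 ∧ g 1 = 0 := by
    rcases two (g 0) with h0 | h0 <;> rcases two (g 1) with h1 | h1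
    · exact ⟨h0, h1⟩
    · exfalso; apply hb0; rw [h0, h1, zero_smul, one_smul, zero_add] at hsum; exact hsum
    · exfalso; apply ha0; rw [h0, h1, one_smul, zero_smul, add_zero] at hsum; exact hsum
    · exfalso; apply hab
      rw [h0, h1, one_smul, one_smul] at hsum
      rw [eq_neg_of_add_eq_zero_left hsum, hneg]
  intro i
  fin_cases i
  · exact hg0.1
  · exact hg0.2
  · exact hg2
  · exact hg3

/-- Coordinate-free bad-edge resolution: if `W ≤ (ZMod 2)⁴` is a 2-dimensional
subspace with nonzero elements `u1, u2, u3`, and `v, v' ∉ W`, then there is a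
vector `w` such that for all `1 ≤ i < j ≤ 3` and each `u ∈ {v, v'}` the family
`{u_i, u_j, u, w}` is linearly independent. -/
theorem bad_edge_resolution_coordinate_free
    (W : Submodule (ZMod 2) (Fin 4 → ZMod 2))
    (hW : Module.finrank (ZMod 2) W = 2)
    (u1 u2 u3 : Fin 4 → ZMod 2)
    (hu1 : u1 ∈ W) (hu2 : u2 ∈ W) (hu3 : u3 ∈ W)
    (h1 : u1 ≠ 0) (h2 : u2 ≠ 0) (h3 : u3 ≠ 0)
    (h12 : u1 ≠ u2) (h13 : u1 ≠ u3) (h23 : u2 ≠ u3)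
    (v v' : Fin 4 → ZMod 2) (hv : v ∉ W) (hv' : v' ∉ W) :
    ∃ w : Fin 4 → ZMod 2, ∀ u ∈ ({v, v'} : Set (Fin 4 → ZMod 2)),
      LinearIndependent (ZMod 2) ![u1, u2, u, w] ∧
      LinearIndependent (ZMod 2) ![u1, u3, u, w] ∧
      LinearIndependent (ZMod 2) ![u2, u3, u, w] := by
  set A := W ⊔ Submodule.span (ZMod 2) {v} with hA
  set B := W ⊔ Submodule.span (ZMod 2) {v'} with hB
  have hrank : ∀ x : Fin 4 → ZMod 2,
      Module.finrank (ZMod 2) ↥(W ⊔ Submodule.span (ZMod 2) {x}) < 4 := by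
    intro x
    calc Module.finrank (ZMod 2) ↥(W ⊔ Submodule.span (ZMod 2) {x})
        ≤ Module.finrank (ZMod 2) W +
          Module.finrank (ZMod 2) (Submodule.span (ZMod 2) {x}) :=
          Submodule.finrank_add_le_finrank_add_finrank _ _
      _ ≤ 2 + 1 := by
          rw [hW]
          gcongr
          exact (finrank_span_le_card ({x} : Set (Fin 4 → ZMod 2))).trans (by simp)
      _ < 4 := by norm_num
  have hAtop : A ≠ ⊤ := by
    intro h
    have := hrank v
    rw [← hA, h] at this
    simp [finrank_top] at this
  have hBtop : B ≠ ⊤ := by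
    intro h
    have := hrank v'
    rw [← hB, h] at this
    simp [finrank_top] at this
  -- find w outside A ∪ B
  obtain ⟨a, haA⟩ : ∃ a, a ∉ A := by
    by_contra h; push_neg at h; exact hAtop (Submodule.eq_top_iff'.mpr h)
  obtain ⟨b, hbB⟩ : ∃ b, b ∉ B := by
    by_contra h; push_neg at h; exact hBtop (Submodule.eq_top_iff'.mpr h)
  obtain ⟨w, hwA, hwB⟩ : ∃ w, w ∉ A ∧ w ∉ B := by
    by_cases haB : a ∈ B
    · by_cases hbA : b ∈ A
      · refine ⟨a + b, fun h => haA ?_, fun h => hbB ?_⟩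
        · have := A.sub_mem h hbA; simpa using this
        · have := B.sub_mem h haB; simpa using this
      · exact ⟨b, hbA, hbB⟩
    · exact ⟨a, haA, haB⟩
  refine ⟨w, ?_⟩
  rintro u hu
  have hwW : ∀ u₀, u₀ = v ∨ u₀ = v' → w ∉ W ⊔ Submodule.span (ZMod 2) {u₀} := by
    rintro u₀ (rfl | rfl)
    · exact hwA
    · exact hwB
  have huW : u ∉ W := by rcases hu with rfl | rfl; exacts [hv, hv']
  have hw' : w ∉ W ⊔ Submodule.span (ZMod 2) {u} := by
    rcases hu with rfl | rfl
    · exact hwA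
    · exact hwB
  exact ⟨li_aux W u1 u2 u w hu1 hu2 h1 h2 h12 huW hw',
         li_aux W u1 u3 u w hu1 hu3 h1 h3 h13 huW hw',
         li_aux W u2 u3 u w hu2 hu3 h2 h3 h23 huW hw'⟩
end

section
/- Let u1, u2, u3, u4 ∈ (ZMod 2)^4 satisfy u1 + u2 + u3 + u4 = 0 and suppose that every 3-element subfamily {u_i, u_j, u_k} (1 ≤ i < j < k ≤ 4) is linearly independent over ZMod 2. Then there exists w ∈ (ZMod 2)^4 such that for every 1 ≤ i < j < k ≤ 4 the family {u_i, u_j, u_k, w} is linearly independent (hence a basis of (ZMod 2)^4). -/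
private lemma snoc4 {α : Type*} (a b c w : α) :
    ![a, b, c, w] = Fin.snoc ![a, b, c] w := by
  funext i; fin_cases i <;> rfl

/-- Bad-vertex resolution: if `u1 + u2 + u3 + u4 = 0` in `(ZMod 2)⁴` and every
3-element subfamily is linearly independent, then there is a vector `w` such that
each of the four families `{u_i, u_j, u_k, w}` is linearly independent. -/
theorem bad_vertex_resolution (u1 u2 u3 u4 : Fin 4 → ZMod 2)
    (hsum : u1 + u2 + u3 + u4 = 0)
    (h123 : LinearIndependent (ZMod 2) ![u1, u2, u3])
    (h124 : LinearIndependent (ZMod 2) ![u1, u2, u4])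
    (h134 : LinearIndependent (ZMod 2) ![u1, u3, u4])
    (h234 : LinearIndependent (ZMod 2) ![u2, u3, u4]) :
    ∃ w : Fin 4 → ZMod 2,
      LinearIndependent (ZMod 2) ![u1, u2, u3, w] ∧
      LinearIndependent (ZMod 2) ![u1, u2, u4, w] ∧
      LinearIndependent (ZMod 2) ![u1, u3, u4, w] ∧
      LinearIndependent (ZMod 2) ![u2, u3, u4, w] := by
  have h4 : u4 = u1 + u2 + u3 := by
    have := neg_eq_of_add_eq_zero_right hsum
    rw [← this]; funext i; simp [CharTwo.neg_eq]
  set V : Submodule (ZMod 2) (Fin 4 → ZMod 2) :=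
    Submodule.span (ZMod 2) (Set.range ![u1, u2, u3]) with hV
  have hmem1 : u1 ∈ V := Submodule.subset_span ⟨0, rfl⟩
  have hmem2 : u2 ∈ V := Submodule.subset_span ⟨1, rfl⟩
  have hmem3 : u3 ∈ V := Submodule.subset_span ⟨2, rfl⟩
  have hmem4 : u4 ∈ V := by rw [h4]; exact add_mem (add_mem hmem1 hmem2) hmem3
  have hVne : V ≠ ⊤ := by
    intro htop
    have h1 : Module.finrank (ZMod 2) V = 3 := by
      rw [hV, finrank_span_eq_card h123]; simp
    have h2 : Module.finrank (ZMod 2) V = 4 := by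
      rw [htop, finrank_top, Module.finrank_pi]; simp
    omega
  have hex : ∃ w, w ∉ V := by
    by_contra h
    push_neg at h
    exact hVne (Submodule.eq_top_iff'.mpr h)
  obtain ⟨w, hw⟩ := hex
  have key : ∀ a b c : Fin 4 → ZMod 2, a ∈ V → b ∈ V → c ∈ V →
      LinearIndependent (ZMod 2) ![a, b, c] →
      LinearIndependent (ZMod 2) ![a, b, c, w] := by
    intro a b c ha hb hc hind
    rw [snoc4]
    refine linearIndependent_fin_snoc.mpr ⟨hind, fun hmem => hw ?_⟩
    have hle : Submodule.span (ZMod 2) (Set.range ![a, b, c]) ≤ V := by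
      rw [Submodule.span_le]
      rintro x ⟨i, rfl⟩
      fin_cases i <;> simpa
    exact hle hmem
  exact ⟨w, key _ _ _ hmem1 hmem2 hmem3 h123, key _ _ _ hmem1 hmem2 hmem4 h124,
    key _ _ _ hmem1 hmem3 hmem4 h134, key _ _ _ hmem2 hmem3 hmem4 h234⟩
end

section
/- Let m ≥ 6 be a natural number. For any two distinct elements i, j of Fin m there exists a 4-element subset V of Fin m with i ∈ V and j ∈ V, where V is either of the form {0, x, x+1, m−1} for some 1 ≤ x ≤ m−3 or of the form {x, x+1, y, y+1} for some integers x, y with 0 ≤ x, x+2 ≤ y and y+1 ≤ m−1. -/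
open Fin.NatCast

lemma finCastNe (m x y : ℕ) [NeZero m] (hx : x < m) (hy : y < m) (h : x ≠ y) :
    (x : Fin m) ≠ (y : Fin m) := by
  simp [Fin.ext_iff, Fin.val_natCast, Nat.mod_eq_of_lt hx, Nat.mod_eq_of_lt hy, h]

lemma card4 {α} [DecidableEq α] {a b c d : α} (hab : a ≠ b) (hac : a ≠ c) (had : a ≠ d)
    (hbc : b ≠ c) (hbd : b ≠ d) (hcd : c ≠ d) : ({a, b, c, d} : Finset α).card = 4 := by
  rw [Finset.card_insert_of_notMem (by simp [hab, hac, had]),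
    Finset.card_insert_of_notMem (by simp [hbc, hbd]),
    Finset.card_insert_of_notMem (by simp [hcd]), Finset.card_singleton]

lemma auxmain (m : ℕ) [NeZero m] (hm : 6 ≤ m) (a b : ℕ) (ha : a < m) (hb : b < m)
    (hab : a < b) :
    ∃ V : Finset (Fin m), V.card = 4 ∧ (a : Fin m) ∈ V ∧ (b : Fin m) ∈ V ∧
      ((∃ x : ℕ, 1 ≤ x ∧ x ≤ m - 3 ∧
          V = ({0, (x : Fin m), ((x + 1 : ℕ) : Fin m), ((m - 1 : ℕ) : Fin m)} :
            Finset (Fin m))) ∨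
       (∃ x y : ℕ, x + 2 ≤ y ∧ y + 1 ≤ m - 1 ∧
          V = ({(x : Fin m), ((x + 1 : ℕ) : Fin m), (y : Fin m),
                ((y + 1 : ℕ) : Fin m)} : Finset (Fin m)))) := by
  have h0 : (0 : Fin m) = ((0:ℕ) : Fin m) := by simp
  by_cases hb1 : b = m - 1
  · subst hb1
    by_cases ha0 : a = 0
    · subst ha0
      refine ⟨_, ?_, ?_, ?_, Or.inl ⟨2, by omega, by omega, rfl⟩⟩
      · rw [h0]
        exact card4 (finCastNe m 0 2 (by omega) (by omega) (by omega))
          (finCastNe m 0 3 (by omega) (by omega) (by omega))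
          (finCastNe m 0 (m-1) (by omega) (by omega) (by omega))
          (finCastNe m 2 3 (by omega) (by omega) (by omega))
          (finCastNe m 2 (m-1) (by omega) (by omega) (by omega))
          (finCastNe m 3 (m-1) (by omega) (by omega) (by omega))
      · simp
      · simp
    · by_cases ha3 : a ≤ m - 3
      · refine ⟨_, ?_, ?_, ?_, Or.inl ⟨a, by omega, ha3, rfl⟩⟩
        · rw [h0]
          exact card4 (finCastNe m 0 a (by omega) (by omega) (by omega))
            (finCastNe m 0 (a+1) (by omega) (by omega) (by omega))
            (finCastNe m 0 (m-1) (by omega) (by omega) (by omega))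
            (finCastNe m a (a+1) (by omega) (by omega) (by omega))
            (finCastNe m a (m-1) (by omega) (by omega) (by omega))
            (finCastNe m (a+1) (m-1) (by omega) (by omega) (by omega))
        · simp
        · simp
      · -- a = m - 2
        have hae : a = (m - 3) + 1 := by omega
        refine ⟨_, ?_, ?_, ?_, Or.inl ⟨m - 3, by omega, le_refl _, rfl⟩⟩
        · rw [h0]
          exact card4 (finCastNe m 0 (m-3) (by omega) (by omega) (by omega))
            (finCastNe m 0 (m-3+1) (by omega) (by omega) (by omega))
            (finCastNe m 0 (m-1) (by omega) (by omega) (by omega))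
            (finCastNe m (m-3) (m-3+1) (by omega) (by omega) (by omega))
            (finCastNe m (m-3) (m-1) (by omega) (by omega) (by omega))
            (finCastNe m (m-3+1) (m-1) (by omega) (by omega) (by omega))
        · rw [hae]; simp
        · simp
  · have hb2 : b + 1 ≤ m - 1 := by omega
    by_cases hcons : b = a + 1
    · subst hcons
      by_cases ham : a + 4 ≤ m
      · refine ⟨_, ?_, ?_, ?_, Or.inr ⟨a, m - 2, by omega, by omega, rfl⟩⟩
        · exact card4 (finCastNe m a (a+1) (by omega) (by omega) (by omega))
            (finCastNe m a (m-2) (by omega) (by omega) (by omega))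
            (finCastNe m a (m-2+1) (by omega) (by omega) (by omega))
            (finCastNe m (a+1) (m-2) (by omega) (by omega) (by omega))
            (finCastNe m (a+1) (m-2+1) (by omega) (by omega) (by omega))
            (finCastNe m (m-2) (m-2+1) (by omega) (by omega) (by omega))
        · simp
        · simp
      · -- a = m - 3, b = m - 2
        refine ⟨_, ?_, ?_, ?_, Or.inr ⟨0, a, by omega, by omega, rfl⟩⟩
        · exact card4 (finCastNe m 0 (0+1) (by omega) (by omega) (by omega))
            (finCastNe m 0 a (by omega) (by omega) (by omega))
            (finCastNe m 0 (a+1) (by omega) (by omega) (by omega))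
            (finCastNe m (0+1) a (by omega) (by omega) (by omega))
            (finCastNe m (0+1) (a+1) (by omega) (by omega) (by omega))
            (finCastNe m a (a+1) (by omega) (by omega) (by omega))
        · simp
        · simp
    · -- a + 2 ≤ b
      refine ⟨_, ?_, ?_, ?_, Or.inr ⟨a, b, by omega, hb2, rfl⟩⟩
      · exact card4 (finCastNe m a (a+1) (by omega) (by omega) (by omega))
          (finCastNe m a b (by omega) (by omega) (by omega))
          (finCastNe m a (b+1) (by omega) (by omega) (by omega))
          (finCastNe m (a+1) b (by omega) (by omega) (by omega))
          (finCastNe m (a+1) (b+1) (by omega) (by omega) (by omega))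
          (finCastNe m b (b+1) (by omega) (by omega) (by omega))
      · simp
      · simp

/-- The dual of the cyclic polytope `C⁴(m)` is 2-neighborly for `m ≥ 6`: any two
distinct facets `i, j ∈ Fin m` lie in a common vertex, i.e. in a common 4-element
set of one of the two Gale forms `{0, x, x+1, m-1}` (with `1 ≤ x ≤ m-3`) or
`{x, x+1, y, y+1}` (with `0 ≤ x`, `x+2 ≤ y`, `y+1 ≤ m-1`). -/
theorem dual_cyclic_two_neighborly (m : ℕ) [NeZero m] (hm : 6 ≤ m)
    (i j : Fin m) (hij : i ≠ j) :
    ∃ V : Finset (Fin m), V.card = 4 ∧ i ∈ V ∧ j ∈ V ∧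
      ((∃ x : ℕ, 1 ≤ x ∧ x ≤ m - 3 ∧
          V = ({0, (x : Fin m), ((x + 1 : ℕ) : Fin m), ((m - 1 : ℕ) : Fin m)} :
            Finset (Fin m))) ∨
       (∃ x y : ℕ, x + 2 ≤ y ∧ y + 1 ≤ m - 1 ∧
          V = ({(x : Fin m), ((x + 1 : ℕ) : Fin m), (y : Fin m),
                ((y + 1 : ℕ) : Fin m)} : Finset (Fin m)))) := by
  rcases lt_or_gt_of_ne (fun h => hij (Fin.ext h) : i.val ≠ j.val) with h | h
  · obtain ⟨V, h1, h2, h3, h4⟩ := auxmain m hm i.val j.val i.isLt j.isLt h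
    rw [Fin.cast_val_eq_self] at h2 h3
    exact ⟨V, h1, h2, h3, h4⟩
  · obtain ⟨V, h1, h2, h3, h4⟩ := auxmain m hm j.val i.val j.isLt i.isLt h
    rw [Fin.cast_val_eq_self] at h2 h3
    exact ⟨V, h1, h3, h2, h4⟩
end
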